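/- In the GLP random graph process, for every integer t ≥ 1, every real D > 0 and every pair of distinct vertices u, v present in G_t, the probability of the event that u and v are not joined by any edge in G_{2t} and that d_t(u) ≥ D and d_t(v) ≥ D is at most exp( −(1−p)·D² / (8t) ). -/

import Mathlib

open MeasureTheory ProbabilityTheory Filter Finset
open scoped ENNReal

/-- The two kinds of stochastic operations in the GLP process: a vertex-step attaching the
new vertex to `u`, or an edge-step adding an edge between the (ordered) pair `u`, `v`. -/
inductive GLPStep where
  | vertex (u : ℕ) : GLPStep
  | edge (u v : ℕ) : GLPStep
  deriving DecidableEq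

/-- The GLP (generalized linear preferential) random graph process with parameter `p`:
at each step, with probability `p` a vertex-step is performed and with probability `1 - p`
an edge-step is performed, connections being chosen proportionally to degrees.
`n t` is the number of vertices of `G t`, `d t j` is the degree of the `j`-th vertex in
`G t` (zero if not yet present, loops counting twice), `Ecount t u v` is the number of
edges between `u` and `v` in `G t`, and `step t` is the random operation performed to
obtain `G (t+1)` from `G t`. -/
structure GLPProcess (p : ℝ) where
  Ω : Type
  mΩ : MeasurableSpace Ω
  μ : MeasureTheory.Measure Ω
  isProb : MeasureTheory.IsProbabilityMeasure μ
  F : MeasureTheory.Filtration ℕ mΩ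
  n : ℕ → Ω → ℕ
  d : ℕ → ℕ → Ω → ℕ
  Ecount : ℕ → ℕ → ℕ → Ω → ℕ
  step : ℕ → Ω → GLPStep
  /-- `G 1` consists of one vertex with one loop. -/
  n_one : ∀ ω, n 1 ω = 1
  d_one : ∀ ω j, d 1 j ω = if j = 1 then 2 else 0
  Ecount_one : ∀ ω u v, Ecount 1 u v ω = if u = 1 ∧ v = 1 then 1 else 0
  Ecount_symm : ∀ t u v ω, Ecount t u v ω = Ecount t v u ω
  /-- a vertex-step adds one vertex, an edge-step none. -/
  n_succ : ∀ t ω, 1 ≤ t → n (t + 1) ω =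
    (match step t ω with
      | .vertex _ => n t ω + 1
      | .edge _ _ => n t ω)
  /-- degree update: in a vertex-step the chosen vertex and the incoming vertex (labeled
  `n t ω + 1`) each gain one; in an edge-step each chosen endpoint gains one (so a loop
  adds two to its vertex). -/
  d_succ : ∀ t ω j, 1 ≤ t → d (t + 1) j ω =
    (match step t ω with
      | .vertex u => d t j ω + (if j = u then 1 else 0) + (if j = n t ω + 1 then 1 else 0)
      | .edge u v => d t j ω + (if j = u then 1 else 0) + (if j = v then 1 else 0))
  Ecount_succ : ∀ t ω u v, 1 ≤ t → Ecount (t + 1) u v ω =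
    (match step t ω with
      | .vertex w => Ecount t u v ω +
          (if (u = w ∧ v = n t ω + 1) ∨ (v = w ∧ u = n t ω + 1) then 1 else 0)
      | .edge w z => Ecount t u v ω +
          (if (u = w ∧ v = z) ∨ (u = z ∧ v = w) then 1 else 0))
  adapted_n : ∀ t, Measurable[F t] (n t)
  adapted_d : ∀ t j, Measurable[F t] (d t j)
  adapted_E : ∀ t u v, Measurable[F t] (Ecount t u v)
  step_meas_vertex : ∀ t u, MeasurableSet[F (t + 1)] {ω | step t ω = GLPStep.vertex u}
  step_meas_edge : ∀ t u v, MeasurableSet[F (t + 1)] {ω | step t ω = GLPStep.edge u v}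
  /-- conditional law of a vertex-step given `F t`: the new vertex attaches to `u` with
  probability `p * d t u / (2 t)`. -/
  law_vertex : ∀ t, 1 ≤ t → ∀ u : ℕ, ∀ A : Set Ω, MeasurableSet[F t] A →
    μ (A ∩ {ω | step t ω = GLPStep.vertex u}) =
      ∫⁻ ω in A, ENNReal.ofReal (p * (d t u ω : ℝ) / (2 * t)) ∂μ
  /-- conditional law of an edge-step given `F t`: the ordered pair `(u, v)` is chosen with
  probability `(1 - p) * d t u * d t v / (4 t ^ 2)`. -/
  law_edge : ∀ t, 1 ≤ t → ∀ u v : ℕ, ∀ A : Set Ω, MeasurableSet[F t] A →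
    μ (A ∩ {ω | step t ω = GLPStep.edge u v}) =
      ∫⁻ ω in A, ENNReal.ofReal ((1 - p) * (d t u ω : ℝ) * (d t v ω : ℝ) / (4 * t ^ 2)) ∂μ

/-- `T j`: the random time at which the `j`-th vertex is added to the graph. -/
noncomputable def GLPProcess.T {p : ℝ} (P : GLPProcess p) (j : ℕ) (ω : P.Ω) : ℕ :=
  sInf {t : ℕ | 1 ≤ t ∧ j ≤ P.n t ω}

/-- `d_{t,m}(j)`: the total degree at time `t` of the `j`-th block of `m` consecutive
vertices. -/
def GLPProcess.blockDeg {p : ℝ} (P : GLPProcess p) (m t j : ℕ) (ω : P.Ω) : ℕ :=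
  ∑ i ∈ Finset.Icc ((j - 1) * m + 1) (j * m), P.d t i ω

/-- `T^{(m)}_{j,k}`: the first time the `j`-th block of `m` vertices has total degree at
least `k` (`⊤` if this never happens). -/
noncomputable def GLPProcess.blockTime {p : ℝ} (P : GLPProcess p) (m j k : ℕ) (ω : P.Ω) : ℕ∞ :=
  sInf {x : ℕ∞ | ∃ t : ℕ, x = (t : ℕ∞) ∧ 1 ≤ t ∧ k ≤ P.blockDeg m t j ω}

namespace GLPProcess
variable {p : ℝ} (P : GLPProcess p)

lemma d_succ_vertex {t : ℕ} (ht : 1 ≤ t) {w : ℕ} (j : ℕ) {ω : P.Ω}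
    (h : P.step t ω = GLPStep.vertex w) :
    P.d (t + 1) j ω
      = P.d t j ω + (if j = w then 1 else 0) + (if j = P.n t ω + 1 then 1 else 0) := by
  rw [P.d_succ t ω j ht, h]

lemma d_succ_edge {t : ℕ} (ht : 1 ≤ t) {w z : ℕ} (j : ℕ) {ω : P.Ω}
    (h : P.step t ω = GLPStep.edge w z) :
    P.d (t + 1) j ω
      = P.d t j ω + (if j = w then 1 else 0) + (if j = z then 1 else 0) := by
  rw [P.d_succ t ω j ht, h]

lemma Ecount_succ_vertex {t : ℕ} (ht : 1 ≤ t) {w : ℕ} (u v : ℕ) {ω : P.Ω}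
    (h : P.step t ω = GLPStep.vertex w) :
    P.Ecount (t + 1) u v ω = P.Ecount t u v ω +
      (if (u = w ∧ v = P.n t ω + 1) ∨ (v = w ∧ u = P.n t ω + 1) then 1 else 0) := by
  rw [P.Ecount_succ t ω u v ht, h]

lemma Ecount_succ_edge {t : ℕ} (ht : 1 ≤ t) {w z : ℕ} (u v : ℕ) {ω : P.Ω}
    (h : P.step t ω = GLPStep.edge w z) :
    P.Ecount (t + 1) u v ω = P.Ecount t u v ω +
      (if (u = w ∧ v = z) ∨ (u = z ∧ v = w) then 1 else 0) := by
  rw [P.Ecount_succ t ω u v ht, h]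

lemma d_le_succ (t : ℕ) (ht : 1 ≤ t) (j : ℕ) (ω : P.Ω) : P.d t j ω ≤ P.d (t + 1) j ω := by
  cases hst : P.step t ω with
  | vertex w => rw [P.d_succ_vertex ht j hst]; split_ifs <;> omega
  | edge w z => rw [P.d_succ_edge ht j hst]; split_ifs <;> omega

lemma d_mono (j : ℕ) (ω : P.Ω) {t s : ℕ} (ht : 1 ≤ t) (hts : t ≤ s) :
    P.d t j ω ≤ P.d s j ω := by
  induction s, hts using Nat.le_induction with
  | base => exact le_rfl
  | succ s hs ih => exact le_trans ih (P.d_le_succ s (le_trans ht hs) j ω)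

lemma Ecount_le_succ (t : ℕ) (ht : 1 ≤ t) (u v : ℕ) (ω : P.Ω) :
    P.Ecount t u v ω ≤ P.Ecount (t + 1) u v ω := by
  cases hst : P.step t ω with
  | vertex w => rw [P.Ecount_succ_vertex ht u v hst]; split_ifs <;> omega
  | edge w z => rw [P.Ecount_succ_edge ht u v hst]; split_ifs <;> omega

lemma Ecount_mono_time (u v : ℕ) (ω : P.Ω) {t s : ℕ} (ht : 1 ≤ t) (hts : t ≤ s) :
    P.Ecount t u v ω ≤ P.Ecount s u v ω := by
  induction s, hts using Nat.le_induction with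
  | base => exact le_rfl
  | succ s hs ih => exact le_trans ih (P.Ecount_le_succ s (le_trans ht hs) u v ω)

lemma d_le_two_mul {t : ℕ} (ht : 1 ≤ t) (j : ℕ) (ω : P.Ω) : P.d t j ω ≤ 2 * t := by
  induction t, ht using Nat.le_induction with
  | base => rw [P.d_one]; split_ifs <;> omega
  | succ s hs ih =>
      cases hst : P.step s ω with
      | vertex w => rw [P.d_succ_vertex hs j hst]; split_ifs <;> omega
      | edge w z => rw [P.d_succ_edge hs j hst]; split_ifs <;> omega

end GLPProcess

/-- For every `t ≥ 1`, `D > 0` and distinct vertices `u, v` present in `G t`, the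
probability that `u` and `v` are not joined by any edge in `G (2t)` while both have degree
at least `D` at time `t` is at most `exp(-(1-p) D² / (8t))`. -/
theorem glp_disconnection_probability_bound (p : ℝ) (hp : p ∈ Set.Ioo (0 : ℝ) 1)
    (P : GLPProcess p) (t : ℕ) (ht : 1 ≤ t) (D : ℝ) (hD : 0 < D)
    (u v : ℕ) (hu : 1 ≤ u) (hv : 1 ≤ v) (huv : u ≠ v) :
    P.μ {ω | u ≤ P.n t ω ∧ v ≤ P.n t ω ∧ P.Ecount (2 * t) u v ω = 0 ∧
        D ≤ (P.d t u ω : ℝ) ∧ D ≤ (P.d t v ω : ℝ)} ≤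
      ENNReal.ofReal (Real.exp (-(1 - p) * D ^ 2 / (8 * t))) := by
  haveI := P.isProb
  obtain ⟨hp0, hp1⟩ := hp
  have htR : (0:ℝ) < t := by exact_mod_cast ht
  by_cases hD2 : D ≤ 2 * t
  swap
  · have hempty : {ω | u ≤ P.n t ω ∧ v ≤ P.n t ω ∧ P.Ecount (2 * t) u v ω = 0 ∧
        D ≤ (P.d t u ω : ℝ) ∧ D ≤ (P.d t v ω : ℝ)} = ∅ := by
      refine Set.eq_empty_iff_forall_notMem.2 fun ω hω => ?_
      have h1 : (P.d t u ω : ℝ) ≤ 2 * t := by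
        exact_mod_cast P.d_le_two_mul ht u ω
      exact hD2 (le_trans hω.2.2.2.1 h1)
    rw [hempty, measure_empty]
    exact zero_le
  · set c : ℝ := (1 - p) * D ^ 2 / (16 * t ^ 2) with hc
    have hc0 : 0 ≤ c := by
      apply div_nonneg
      · nlinarith [sq_nonneg D]
      · positivity
    have h2c : 2 * c = (1 - p) * D ^ 2 / (8 * t ^ 2) := by rw [hc]; ring
    have hc1 : 2 * c ≤ 1 := by
      rw [h2c, div_le_one (by positivity)]
      nlinarith [pow_le_pow_left₀ hD.le hD2 2, sq_nonneg D]
    set a : ℝ≥0∞ := ENNReal.ofReal c with ha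
    set A : ℕ → Set P.Ω := fun s => {ω | u ≤ P.n t ω ∧ v ≤ P.n t ω ∧
        D ≤ (P.d t u ω : ℝ) ∧ D ≤ (P.d t v ω : ℝ) ∧ P.Ecount s u v ω = 0} with hA
    have hA_meas : ∀ s, t ≤ s → MeasurableSet[P.F s] (A s) := by
      intro s hts
      have hn : Measurable[P.F s] (P.n t) := (P.adapted_n t).mono (P.F.mono hts) le_rfl
      have hdu : Measurable[P.F s] (P.d t u) := (P.adapted_d t u).mono (P.F.mono hts) le_rfl
      have hdv : Measurable[P.F s] (P.d t v) := (P.adapted_d t v).mono (P.F.mono hts) le_rfl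
      have h1 : MeasurableSet[P.F s] {ω | u ≤ P.n t ω} := hn measurableSet_Ici
      have h2 : MeasurableSet[P.F s] {ω | v ≤ P.n t ω} := hn measurableSet_Ici
      have h3 : MeasurableSet[P.F s] {ω | D ≤ (P.d t u ω : ℝ)} := by
        have he : {ω | D ≤ (P.d t u ω : ℝ)} = P.d t u ⁻¹' Set.Ici ⌈D⌉₊ := by
          ext ω; simp [Set.mem_preimage, Set.mem_Ici, Nat.ceil_le]
        rw [he]; exact hdu measurableSet_Ici
      have h4 : MeasurableSet[P.F s] {ω | D ≤ (P.d t v ω : ℝ)} := by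
        have he : {ω | D ≤ (P.d t v ω : ℝ)} = P.d t v ⁻¹' Set.Ici ⌈D⌉₊ := by
          ext ω; simp [Set.mem_preimage, Set.mem_Ici, Nat.ceil_le]
        rw [he]; exact hdv measurableSet_Ici
      have h5 : MeasurableSet[P.F s] {ω | P.Ecount s u v ω = 0} :=
        P.adapted_E s u v (measurableSet_singleton 0)
      exact h1.inter (h2.inter (h3.inter (h4.inter h5)))
    have key : ∀ s, t ≤ s → s ≤ 2 * t →
        P.μ (A (s + 1)) ≤ (1 - 2 * a) * P.μ (A s) := by
      intro s hts hs2
      have hs1 : 1 ≤ s := le_trans ht hts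
      set E1 : Set P.Ω := A s ∩ {ω | P.step s ω = GLPStep.edge u v} with hE1
      set E2 : Set P.Ω := A s ∩ {ω | P.step s ω = GLPStep.edge v u} with hE2
      have hAsm : MeasurableSet[P.mΩ] (A s) := P.F.le s _ (hA_meas s hts)
      have hAs1m : MeasurableSet[P.mΩ] (A (s + 1)) :=
        P.F.le (s + 1) _ (hA_meas (s + 1) (le_trans hts (Nat.le_succ s)))
      have hE1m : MeasurableSet[P.mΩ] E1 :=
        hAsm.inter (P.F.le (s + 1) _ (P.step_meas_edge s u v))
      have hE2m : MeasurableSet[P.mΩ] E2 :=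
        hAsm.inter (P.F.le (s + 1) _ (P.step_meas_edge s v u))
      have hsub : A (s + 1) ⊆ A s := by
        intro ω h
        refine ⟨h.1, h.2.1, h.2.2.1, h.2.2.2.1, ?_⟩
        have := P.Ecount_le_succ s hs1 u v ω
        have h0 := h.2.2.2.2
        omega
      have hdisj1 : Disjoint (A (s + 1)) E1 := by
        rw [Set.disjoint_left]
        intro ω h1 h2
        have he := P.Ecount_succ_edge hs1 u v h2.2
        rw [if_pos (Or.inl ⟨rfl, rfl⟩)] at he
        have h0 := h1.2.2.2.2
        omega
      have hdisj2 : Disjoint (A (s + 1)) E2 := by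
        rw [Set.disjoint_left]
        intro ω h1 h2
        have he := P.Ecount_succ_edge hs1 u v h2.2
        rw [if_pos (Or.inr ⟨rfl, rfl⟩)] at he
        have h0 := h1.2.2.2.2
        omega
      have hdisj12 : Disjoint E1 E2 := by
        rw [Set.disjoint_left]
        intro ω h1 h2
        have := h1.2.symm.trans h2.2
        exact huv (by injection this)
      have hunion : P.μ (A (s + 1)) + P.μ E1 + P.μ E2 ≤ P.μ (A s) := by
        have e1 : P.μ ((A (s + 1) ∪ E1) ∪ E2) = P.μ (A (s + 1)) + P.μ E1 + P.μ E2 := by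
          rw [measure_union (hdisj2.union_left hdisj12) hE2m,
            measure_union hdisj1 hE1m]
        calc P.μ (A (s + 1)) + P.μ E1 + P.μ E2 = P.μ ((A (s + 1) ∪ E1) ∪ E2) := e1.symm
          _ ≤ P.μ (A s) := measure_mono (Set.union_subset
              (Set.union_subset hsub Set.inter_subset_left) Set.inter_subset_left)
      have hlow : ∀ w z : ℕ, (∀ ω ∈ A s, D ≤ (P.d t w ω : ℝ) ∧ D ≤ (P.d t z ω : ℝ)) →
          a * P.μ (A s) ≤ P.μ (A s ∩ {ω | P.step s ω = GLPStep.edge w z}) := by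
        intro w z hwz
        rw [P.law_edge s hs1 w z (A s) (hA_meas s hts)]
        calc a * P.μ (A s) = ∫⁻ _ in A s, a ∂P.μ := (setLIntegral_const _ _).symm
          _ ≤ ∫⁻ ω in A s,
              ENNReal.ofReal ((1 - p) * (P.d s w ω : ℝ) * (P.d s z ω : ℝ) / (4 * s ^ 2)) ∂P.μ := by
            refine setLIntegral_mono' hAsm fun ω hω => ?_
            refine ENNReal.ofReal_le_ofReal ?_
            have hdw : D ≤ (P.d s w ω : ℝ) := by
              refine le_trans (hwz ω hω).1 ?_
              exact_mod_cast P.d_mono w ω ht hts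
            have hdz : D ≤ (P.d s z ω : ℝ) := by
              refine le_trans (hwz ω hω).2 ?_
              exact_mod_cast P.d_mono z ω ht hts
            have hsR : (s : ℝ) ≤ 2 * t := by exact_mod_cast hs2
            have hsR1 : (1:ℝ) ≤ (s : ℝ) := by exact_mod_cast hs1
            rw [hc, div_le_div_iff₀ (by positivity) (by positivity)]
            have h1 : D * D ≤ (P.d s w ω : ℝ) * (P.d s z ω : ℝ) :=
              mul_le_mul hdw hdz hD.le (le_trans hD.le hdw)
            have h2 : (s : ℝ) ^ 2 ≤ 4 * t ^ 2 := by nlinarith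
            nlinarith [mul_le_mul h1 h2 (by positivity) (mul_nonneg
              (le_trans hD.le hdw) (le_trans hD.le hdz)), sq_nonneg D]
      have hl1 : a * P.μ (A s) ≤ P.μ E1 :=
        hlow u v (fun ω hω => ⟨hω.2.2.1, hω.2.2.2.1⟩)
      have hl2 : a * P.μ (A s) ≤ P.μ E2 :=
        hlow v u (fun ω hω => ⟨hω.2.2.2.1, hω.2.2.1⟩)
      have hfin : P.μ (A s) ≠ ∞ := measure_ne_top _ _
      have h2am : 2 * a * P.μ (A s) ≠ ∞ := by
        refine ENNReal.mul_ne_top (ENNReal.mul_ne_top (by simp) ?_) hfin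
        simp [ha]
      have hstep : P.μ (A (s + 1)) + 2 * a * P.μ (A s) ≤ P.μ (A s) := by
        have e2 : 2 * a * P.μ (A s) = a * P.μ (A s) + a * P.μ (A s) := by ring
        rw [e2]
        calc P.μ (A (s + 1)) + (a * P.μ (A s) + a * P.μ (A s))
            ≤ P.μ (A (s + 1)) + (P.μ E1 + P.μ E2) := by
              exact add_le_add_right (add_le_add hl1 hl2) _
          _ = P.μ (A (s + 1)) + P.μ E1 + P.μ E2 := by rw [add_assoc]
          _ ≤ P.μ (A s) := hunion
      have hle := ENNReal.le_sub_of_add_le_right h2am hstep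
      have e3 : (1 - 2 * a) * P.μ (A s) = P.μ (A s) - 2 * a * P.μ (A s) := by
        rw [ENNReal.sub_mul (fun _ _ => hfin), one_mul]
      rw [e3]
      exact hle
    have bound : ∀ k, k ≤ t → P.μ (A (t + k)) ≤ (1 - 2 * a) ^ k := by
      intro k
      induction k with
      | zero => intro _; simpa using prob_le_one
      | succ k ih =>
          intro hk
          have h1 := key (t + k) (Nat.le_add_right t k) (by omega)
          calc P.μ (A (t + (k + 1))) = P.μ (A ((t + k) + 1)) := rfl
            _ ≤ (1 - 2 * a) * P.μ (A (t + k)) := h1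
            _ ≤ (1 - 2 * a) * (1 - 2 * a) ^ k :=
                mul_le_mul_right (ih (le_trans (Nat.le_succ k) hk)) _
            _ = (1 - 2 * a) ^ (k + 1) := by rw [pow_succ, mul_comm]
    have hset : {ω | u ≤ P.n t ω ∧ v ≤ P.n t ω ∧ P.Ecount (2 * t) u v ω = 0 ∧
        D ≤ (P.d t u ω : ℝ) ∧ D ≤ (P.d t v ω : ℝ)} = A (2 * t) := by
      ext ω; rw [hA]; simp only [Set.mem_setOf_eq]; tauto
    rw [hset]
    have h2t : 2 * t = t + t := by ring
    have hb : P.μ (A (2 * t)) ≤ (1 - 2 * a) ^ t := by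
      rw [h2t]; exact bound t le_rfl
    refine le_trans hb ?_
    have e4 : (1 : ℝ≥0∞) - 2 * a = ENNReal.ofReal (1 - 2 * c) := by
      rw [ha, ENNReal.ofReal_sub _ (by linarith), ENNReal.ofReal_one,
        ENNReal.ofReal_mul (by norm_num : (0:ℝ) ≤ 2)]
      norm_num
    rw [e4, ← ENNReal.ofReal_pow (by linarith)]
    refine ENNReal.ofReal_le_ofReal ?_
    have h5 : (1 - 2 * c) ^ t ≤ Real.exp (-(2 * c)) ^ t := by
      refine pow_le_pow_left₀ (by linarith) ?_ t
      linarith [Real.add_one_le_exp (-(2 * c))]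
    refine le_trans h5 ?_
    rw [← Real.exp_nat_mul]
    apply Real.exp_le_exp.2
    have htne : (t:ℝ) ≠ 0 := ne_of_gt htR
    have e5 : (t:ℝ) * -(2 * c) = -(1 - p) * D ^ 2 / (8 * t) := by
      rw [hc]; field_simp; ring
    rw [e5]
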